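/- Let X be a real vector space and let A, B be disjoint nonempty convex subsets of X such that A is vectorially closed (vcl(A) = A) and relatively solid (icr(A) ≠ ∅), B is contained in a finite-dimensional linear subspace Y of X, and B is compact in Y (with respect to the standard topology of the finite-dimensional space Y). Then A and B can be strongly separated by a linear functional: there exist a linear functional f : X → ℝ and real numbers α < β such that f(a) ≤ α for all a ∈ A and f(b) ≥ β for all b ∈ B. -/

import Mathlib

open Pointwise

/-- Algebraic interior (core) of a set `A` in a real vector space:
`cor A = {x ∈ A | ∀ d, ∃ δ > 0, ∀ λ ∈ [0, δ], x + λ • d ∈ A}`. -/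
def cor {X : Type*} [AddCommGroup X] [Module ℝ X] (A : Set X) : Set X :=
  {x | x ∈ A ∧ ∀ d : X, ∃ δ : ℝ, 0 < δ ∧ ∀ lam ∈ Set.Icc (0 : ℝ) δ, x + lam • d ∈ A}

/-- Relative algebraic interior of `A`: directions are taken in `L(A) = span (A - A)`. -/
def icr {X : Type*} [AddCommGroup X] [Module ℝ X] (A : Set X) : Set X :=
  {x | x ∈ A ∧ ∀ d ∈ Submodule.span ℝ (A - A),
    ∃ δ : ℝ, 0 < δ ∧ ∀ lam ∈ Set.Icc (0 : ℝ) δ, x + lam • d ∈ A}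

/-- Vectorial closure of `A`:
`vcl A = {b | ∃ d, ∀ δ > 0, ∃ λ ∈ [0, δ], b + λ • d ∈ A}`. -/
def vcl {X : Type*} [AddCommGroup X] [Module ℝ X] (A : Set X) : Set X :=
  {b | ∃ d : X, ∀ δ : ℝ, 0 < δ → ∃ lam ∈ Set.Icc (0 : ℝ) δ, b + lam • d ∈ A}

/-- The core convex topology `τ_c`: the topology whose open sets are the unions of
members of `𝔅 = {A | A convex and cor A = A}`; since `𝔅` is a topological basis
(closed under binary intersection, contains `X` and `∅`), this is the topology
generated by `𝔅`. -/
def tauc (X : Type*) [AddCommGroup X] [Module ℝ X] : TopologicalSpace X :=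
  TopologicalSpace.generateFrom {A : Set X | Convex ℝ A ∧ cor A = A}

open Set

section Helpers
variable {X : Type*} [AddCommGroup X] [Module ℝ X]


lemma absorbent_of_pointwise {S : Set X}
    (h : ∀ d : X, ∃ δ : ℝ, 0 < δ ∧ ∀ lam ∈ Set.Icc (0:ℝ) δ, lam • d ∈ S) :
    Absorbent ℝ S := by
  intro x
  obtain ⟨δ₁, hδ₁, h₁⟩ := h x
  obtain ⟨δ₂, hδ₂, h₂⟩ := h (-x)
  refine Absorbs.of_norm ⟨max δ₁⁻¹ δ₂⁻¹, fun c hc => ?_⟩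
  have hc0 : c ≠ 0 := by
    have : (0:ℝ) < δ₁⁻¹ := by positivity
    have : (0:ℝ) < ‖c‖ := lt_of_lt_of_le (lt_of_lt_of_le this (le_max_left _ _)) hc
    simpa using this.ne'
  rw [Set.singleton_subset_iff, Set.mem_smul_set_iff_inv_smul_mem₀ hc0]
  rcases le_or_gt 0 c with hcpos | hcneg
  · have hcpos' : 0 < c := lt_of_le_of_ne hcpos (Ne.symm hc0)
    have h1 : δ₁⁻¹ ≤ c := le_trans (le_max_left _ _) (by rwa [Real.norm_eq_abs, abs_of_pos hcpos'] at hc)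
    have : c⁻¹ ≤ δ₁ := by
      rw [← inv_inv δ₁]
      exact inv_anti₀ (by positivity) h1
    exact h₁ c⁻¹ ⟨by positivity, this⟩
  · have habs : ‖c‖ = -c := by rw [Real.norm_eq_abs, abs_of_neg hcneg]
    have h1 : δ₂⁻¹ ≤ -c := le_trans (le_max_right _ _) (by rwa [habs] at hc)
    have h2 : (-c)⁻¹ ≤ δ₂ := by
      rw [← inv_inv δ₂]
      exact inv_anti₀ (by positivity) h1
    have hinvpos : (0:ℝ) < (-c)⁻¹ := by
      have : (0:ℝ) < -c := by linarith
      positivity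
    have := h₂ (-c)⁻¹ ⟨hinvpos.le, h2⟩
    have heq : c⁻¹ • x = (-c)⁻¹ • (-x) := by
      rw [smul_neg, ← neg_smul, ← inv_neg, neg_neg]
    rwa [heq]

lemma gaugeHB {S : Set X} (hS : Convex ℝ S) (habs : Absorbent ℝ S) {x : X}
    (hx : 1 ≤ gauge S x) :
    ∃ f : X →ₗ[ℝ] ℝ, f x = gauge S x ∧ ∀ y, f y ≤ gauge S y := by
  have hx0 : x ≠ 0 := by
    rintro rfl
    rw [gauge_zero] at hx; linarith
  have H : ∀ c : ℝ, c • x = 0 → c • gauge S x = 0 := by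
    intro c hcx
    rcases smul_eq_zero.1 hcx with hc | hx'
    · simp [hc]
    · exact absurd hx' hx0
  set fp := LinearPMap.mkSpanSingleton' (σ := RingHom.id ℝ) x (gauge S x) H with hfp
  have hdom : fp.domain = Submodule.span ℝ {x} := rfl
  have hf : ∀ z : fp.domain, fp z ≤ gauge S z := by
    rintro ⟨z, hz⟩
    rw [hdom] at hz
    obtain ⟨t, rfl⟩ := Submodule.mem_span_singleton.1 hz
    rw [LinearPMap.mkSpanSingleton'_apply, RingHom.id_apply]
    rcases le_or_gt 0 t with ht | ht
    · rw [gauge_smul_of_nonneg ht]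
    · have : t • gauge S x < 0 := by
        have h1 : (0:ℝ) < gauge S x := lt_of_lt_of_le one_pos hx
        calc t • gauge S x = t * gauge S x := smul_eq_mul _ _
        _ < 0 := mul_neg_of_neg_of_pos ht h1
      exact le_trans this.le (gauge_nonneg _)
  obtain ⟨g, hg1, hg2⟩ := exists_extension_of_le_sublinear fp (gauge S)
    (fun c hc y => by rw [gauge_smul_of_nonneg hc.le, smul_eq_mul]) (gauge_add_le hS habs) hf
  refine ⟨g, ?_, hg2⟩
  have hmem : x ∈ fp.domain := by rw [hdom]; exact Submodule.mem_span_singleton_self x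
  have := hg1 ⟨x, hmem⟩
  rw [this]
  exact LinearPMap.mkSpanSingleton'_apply_self _ _ _ _

lemma point_sep {A : Set X} (hA : Convex ℝ A) (hAcl : vcl A = A)
    {a0 : X} (ha0 : a0 ∈ icr A) {b : X} (hb : b ∉ A) :
    ∃ (f : X →ₗ[ℝ] ℝ) (r : ℝ), (∀ a ∈ A, f a ≤ r) ∧ r < f b := by
  classical
  have ha0A : a0 ∈ A := ha0.1
  set L : Submodule ℝ X := Submodule.span ℝ (A - A) with hL
  have hsubL : ∀ a ∈ A, a - a0 ∈ L := fun a ha =>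
    Submodule.subset_span (Set.sub_mem_sub ha ha0A)
  by_cases hbL : b - a0 ∈ L
  · -- gauge case
    obtain ⟨L', hcompl⟩ := Submodule.exists_isCompl L
    set At : Set X := (fun x => -a0 + x) '' A with hAt
    have hAt_mem : ∀ y : X, y ∈ At ↔ a0 + y ∈ A := by
      intro y
      constructor
      · rintro ⟨a, ha, rfl⟩; rwa [add_neg_cancel_left]
      · intro h; exact ⟨a0 + y, h, neg_add_cancel_left _ _⟩
    have hAt_sub_L : At ⊆ (L : Set X) := by
      rintro y ⟨a, ha, rfl⟩
      have := hsubL a ha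
      simpa [neg_add_eq_sub] using this
    set Atil : Set X := At + (L' : Set X) with hAtil
    have h0At : (0:X) ∈ At := (hAt_mem 0).2 (by simpa using ha0A)
    have h0Atil : (0:X) ∈ Atil := ⟨0, h0At, 0, L'.zero_mem, by simp⟩
    have hAt_sub : At ⊆ Atil := fun y hy => ⟨y, hy, 0, L'.zero_mem, by simp⟩
    have hconv : Convex ℝ Atil := (hA.translate (-a0)).add L'.convex
    have habs : Absorbent ℝ Atil := by
      apply absorbent_of_pointwise
      intro d
      have hd : d ∈ L ⊔ L' := by rw [hcompl.sup_eq_top]; trivial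
      obtain ⟨u, hu, v, hv, rfl⟩ := Submodule.mem_sup.1 hd
      obtain ⟨δ, hδ, hδA⟩ := ha0.2 u hu
      refine ⟨δ, hδ, fun lam hlam => ?_⟩
      refine ⟨lam • u, (hAt_mem _).2 (hδA lam hlam), lam • v, L'.smul_mem _ hv, by
        rw [smul_add]⟩
    set π := L.linearProjOfIsCompl L' hcompl with hπ
    have hπAt : ∀ z ∈ Atil, (π z : X) ∈ At := by
      rintro z ⟨y, hy, w, hw, rfl⟩
      have h1 : π y = ⟨y, hAt_sub_L hy⟩ :=
        Submodule.linearProjOfIsCompl_apply_left hcompl ⟨y, hAt_sub_L hy⟩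
      have h2 : π w = 0 := Submodule.linearProjOfIsCompl_apply_right' hcompl hw
      rw [map_add, h1, h2, add_zero]
      exact hy
    have hclosed : ∀ x : X, gauge Atil x ≤ 1 → x ∈ Atil := by
      intro x hx
      have hπx : (π x : X) ∈ At := by
        have hvcl : a0 + (π x : X) ∈ vcl A := by
          refine ⟨-(π x : X), fun δ hδ => ?_⟩
          rcases le_or_gt 1 δ with h1 | h1
          · refine ⟨1, ⟨zero_le_one, h1⟩, ?_⟩
            have heq : a0 + (π x : X) + (1:ℝ) • -(π x : X) = a0 := by
              rw [one_smul]; abel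
            rw [heq]; exact ha0A
          · refine ⟨δ, ⟨hδ.le, le_refl _⟩, ?_⟩
            have hlt : gauge Atil ((1 - δ) • x) < 1 := by
              rw [gauge_smul_of_nonneg (by linarith : (0:ℝ) ≤ 1 - δ), smul_eq_mul]
              have h2 : (1-δ) * gauge Atil x ≤ (1-δ) * 1 :=
                mul_le_mul_of_nonneg_left hx (by linarith)
              linarith
            have hmem : (1 - δ) • x ∈ Atil := gauge_lt_one_subset_self hconv h0Atil habs hlt
            have hmem2 := hπAt _ hmem
            rw [map_smul] at hmem2
            have heq : a0 + (π x : X) + δ • -(π x : X) = a0 + (1 - δ) • (π x : X) := by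
              rw [smul_neg, sub_smul, one_smul]; abel
            rw [heq]
            have : ((1 - δ) • π x : L) = ((1-δ) • (π x : X) : X) := rfl
            exact (hAt_mem _).1 (by rwa [this] at hmem2)
        rw [hAcl] at hvcl
        exact (hAt_mem _).2 hvcl
      have hker : x - (π x : X) ∈ L' := by
        have h3 : π (x - (π x : X)) = 0 := by
          have h4 : π ((π x : X)) = π x := Submodule.linearProjOfIsCompl_apply_left hcompl (π x)
          rw [map_sub, h4, sub_self]
        exact (Submodule.linearProjOfIsCompl_apply_eq_zero_iff hcompl).1 h3
      exact ⟨(π x : X), hπx, x - (π x : X), hker, by module⟩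
    have hbt : b - a0 ∉ Atil := by
      rintro ⟨y, hy, w, hw, hsum⟩
      have hsum' : y + w = b - a0 := hsum
      have hyL : y ∈ L := hAt_sub_L hy
      have hwL : w ∈ L := by
        have hweq : w = (b - a0) - y := by rw [← hsum']; abel
        rw [hweq]; exact Submodule.sub_mem _ hbL hyL
      have hw0 : w = 0 := (Submodule.disjoint_def.1 hcompl.disjoint) w hwL hw
      apply hb
      have hyb : y = b - a0 := by rw [← hsum', hw0, add_zero]
      have := (hAt_mem y).1 hy
      rw [hyb] at this
      simpa using this
    have hgt : 1 < gauge Atil (b - a0) := not_le.1 fun h => hbt (hclosed _ h)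
    obtain ⟨f, hfb, hfle⟩ := gaugeHB hconv habs hgt.le
    refine ⟨f, f a0 + 1, fun a ha => ?_, ?_⟩
    · have hmem : a - a0 ∈ Atil := hAt_sub ((hAt_mem _).2 (by simpa using ha))
      have h1 : f (a - a0) ≤ 1 := le_trans (hfle _) (gauge_le_one_of_mem hmem)
      have h2 : f a - f a0 = f (a - a0) := (map_sub f a a0).symm
      linarith
    · have h2 : f b - f a0 = f (b - a0) := (map_sub f b a0).symm
      rw [hfb] at h2
      linarith
  · have hq0 : (Submodule.Quotient.mk (b - a0) : X ⧸ L) ≠ 0 := by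
      rwa [ne_eq, Submodule.Quotient.mk_eq_zero]
    have hex : ∃ φ : Module.Dual ℝ (X ⧸ L), φ (Submodule.Quotient.mk (b - a0)) ≠ 0 := by
      by_contra h
      push_neg at h
      exact hq0 ((Module.forall_dual_apply_eq_zero_iff ℝ _).1 h)
    obtain ⟨φ, hφ⟩ := hex
    set c : ℝ := (φ (Submodule.Quotient.mk (b - a0)))⁻¹ with hc
    set f : X →ₗ[ℝ] ℝ := c • (φ ∘ₗ L.mkQ) with hf
    have hfval : ∀ x : X, f x = c * φ (Submodule.Quotient.mk x) := fun x => rfl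
    have hdiff : ∀ x y : X, f x - f y = c * φ (Submodule.Quotient.mk (x - y)) := by
      intro x y
      rw [hfval, hfval, ← mul_sub, ← map_sub]
      congr 2
    have hfa : ∀ a ∈ A, f a = f a0 := by
      intro a ha
      have h1 : f a - f a0 = 0 := by
        rw [hdiff]
        have : (Submodule.Quotient.mk (a - a0) : X ⧸ L) = 0 :=
          (Submodule.Quotient.mk_eq_zero _).2 (hsubL a ha)
        rw [this, map_zero, mul_zero]
      linarith
    have hfb' : f b - f a0 = 1 := by
      rw [hdiff, hc, inv_mul_cancel₀ hφ]
    refine ⟨f, f a0 + 1/2, fun a ha => by rw [hfa a ha]; linarith, by linarith⟩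

end Helpers

/-- Strong separation. Let `A, B` be disjoint nonempty convex subsets of `X`
with `A` vectorially closed and relatively solid, and `B` contained in a
finite-dimensional subspace `Y` of `X` with `B` compact in `Y` (a finite-dimensional real
vector space carries a unique Hausdorff vector topology, which is its core convex
topology `tauc Y`). Then `A` and `B` are strongly separated by a linear functional. -/
theorem stmt18 {X : Type*} [AddCommGroup X] [Module ℝ X] {A B : Set X}
    (hA : Convex ℝ A) (hB : Convex ℝ B) (hAne : A.Nonempty) (hBne : B.Nonempty)
    (hdisj : Disjoint A B)
    (hAcl : vcl A = A) (hAsolid : (icr A).Nonempty)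
    (Y : Submodule ℝ X) (hYfd : FiniteDimensional ℝ Y) (hBY : B ⊆ (Y : Set X))
    (hBcpt : @IsCompact Y (tauc Y) {y : Y | (y : X) ∈ B}) :
    ∃ (f : X →ₗ[ℝ] ℝ) (α β : ℝ), α < β ∧
      (∀ a ∈ A, f a ≤ α) ∧ (∀ b ∈ B, β ≤ f b) := by
  classical
  obtain ⟨a0, ha0⟩ := hAsolid
  have ha0A : a0 ∈ A := ha0.1
  obtain ⟨b0, hb0⟩ := hBne
  have hnotA : ∀ x ∈ B, x ∉ A := fun x hx hxA => (Set.disjoint_left.1 hdisj) hxA hx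
  set Bs : Set Y := {y : Y | (y : X) ∈ B} with hBs
  have hpt : ∀ i : Bs, ∃ (f : X →ₗ[ℝ] ℝ) (r : ℝ), (∀ a ∈ A, f a ≤ r) ∧ r < f ↑↑i :=
    fun i => point_sep hA hAcl ha0 (hnotA _ i.2)
  choose F r hFr hFb using hpt
  -- the open cover
  set m : Bs → ℝ := fun i => (r i + F i ↑↑i) / 2 with hm
  set W : Bs → Set Y := fun i => ((F i).comp Y.subtype) ⁻¹' Set.Ioi (m i) with hW
  have hWmem : ∀ i y, y ∈ W i ↔ m i < F i ↑y := fun i y => Iff.rfl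
  have hWopen : ∀ i, @IsOpen Y (tauc Y) (W i) := by
    intro i
    set g : Y →ₗ[ℝ] ℝ := (F i).comp Y.subtype with hg
    refine TopologicalSpace.GenerateOpen.basic _ ⟨(convex_Ioi (m i)).linear_preimage g, ?_⟩
    ext y
    refine ⟨fun h => h.1, fun hy => ⟨hy, fun d => ?_⟩⟩
    have hgy : m i < g y := hy
    have hden : (0:ℝ) < |g d| + 1 := by positivity
    have hD : 0 < (g y - m i) / (|g d| + 1) := div_pos (by linarith) hden
    refine ⟨(g y - m i) / (|g d| + 1), hD, fun lam hlam => ?_⟩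
    obtain ⟨hlam0, hlam1⟩ := hlam
    show m i < g (y + lam • d)
    rw [map_add, map_smul, smul_eq_mul]
    have h1 : lam * |g d| ≤ ((g y - m i) / (|g d| + 1)) * |g d| :=
      mul_le_mul_of_nonneg_right hlam1 (abs_nonneg _)
    have h2 : ((g y - m i) / (|g d| + 1)) * (|g d| + 1) = g y - m i :=
      div_mul_cancel₀ _ (ne_of_gt hden)
    have h3 : lam * (-|g d|) ≤ lam * g d :=
      mul_le_mul_of_nonneg_left (neg_abs_le (g d)) hlam0
    nlinarith
  have hcover : Bs ⊆ ⋃ i, W i := by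
    intro y hy
    exact Set.mem_iUnion.2 ⟨⟨y, hy⟩, by
      rw [hWmem]
      have := hFb ⟨y, hy⟩
      simp only [hm]
      linarith⟩
  obtain ⟨t, ht⟩ := @IsCompact.elim_finite_subcover Y (tauc Y) Bs ↥Bs hBcpt W hWopen hcover
  -- t is nonempty
  have hy0 : (⟨b0, hBY hb0⟩ : Y) ∈ Bs := hb0
  obtain ⟨i0, hi0t, _⟩ := Set.mem_iUnion₂.1 (ht hy0)
  have htne : t.Nonempty := ⟨i0, hi0t⟩
  set ε : Bs → ℝ := fun i => (F i ↑↑i - r i) / 2 with hε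
  have hεpos : ∀ i, 0 < ε i := fun i => by
    have := hFb i
    simp only [hε]
    linarith
  set U : Set X := ⋂ i ∈ t, {x : X | |F i x| < ε i} with hU
  have hUmem : ∀ x : X, x ∈ U ↔ ∀ i ∈ t, |F i x| < ε i := fun x => Set.mem_iInter₂
  have h0U : (0:X) ∈ U := (hUmem 0).2 fun i _ => by
    rw [map_zero, abs_zero]; exact hεpos i
  have hUconv : Convex ℝ U := by
    refine convex_iInter₂ fun i _ => ?_
    have heq : {x : X | |F i x| < ε i} = F i ⁻¹' Metric.ball (0:ℝ) (ε i) := by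
      ext x
      simp [Real.dist_eq]
    rw [heq]
    exact (convex_ball 0 (ε i)).linear_preimage (F i)
  have hUdir : ∀ d : X, ∃ δ : ℝ, 0 < δ ∧ ∀ lam ∈ Set.Icc (0:ℝ) δ, lam • d ∈ U := by
    intro d
    set δ0 : ℝ := t.inf' htne fun i => ε i / (|F i d| + 1) with hδ0
    have hδpos : 0 < δ0 := by
      rw [hδ0, Finset.lt_inf'_iff]
      intro i _
      exact div_pos (hεpos i) (by positivity)
    refine ⟨δ0, hδpos, fun lam hlam => ?_⟩
    obtain ⟨hlam0, hlam1⟩ := hlam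
    rw [hUmem]
    intro i hit
    rw [map_smul, smul_eq_mul, abs_mul, abs_of_nonneg hlam0]
    have hle : δ0 ≤ ε i / (|F i d| + 1) := Finset.inf'_le _ hit
    have hden : (0:ℝ) < |F i d| + 1 := by positivity
    have h1 : lam * |F i d| ≤ (ε i / (|F i d| + 1)) * |F i d| :=
      mul_le_mul_of_nonneg_right (le_trans hlam1 hle) (abs_nonneg _)
    have h2 : (ε i / (|F i d| + 1)) * (|F i d| + 1) = ε i :=
      div_mul_cancel₀ _ (ne_of_gt hden)
    nlinarith [hεpos i, abs_nonneg (F i d)]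
  have hABU : ∀ b' ∈ B, ∀ u ∈ U, b' + u ∉ A := by
    intro b' hb' u hu hmem
    have hyB : (⟨b', hBY hb'⟩ : Y) ∈ Bs := hb'
    obtain ⟨i, hit, hiW⟩ := Set.mem_iUnion₂.1 (ht hyB)
    have h1 : m i < F i b' := hiW
    have h2 : F i (b' + u) ≤ r i := hFr i _ hmem
    have h3 : |F i u| < ε i := (hUmem u).1 hu i hit
    rw [map_add] at h2
    have := neg_abs_le (F i u)
    have hm' : m i = (r i + F i ↑↑i) / 2 := rfl
    have hε' : ε i = (F i ↑↑i - r i) / 2 := rfl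
    linarith [abs_le.1 h3.le]
  -- Eidelheit separation of A and B + U
  set z0 : X := a0 - b0 with hz0
  set S : Set X := A - (B + U) with hS
  have hSconv : Convex ℝ S := hA.sub (hB.add hUconv)
  set S' : Set X := (fun x => -z0 + x) '' S with hS'
  have hS'mem : ∀ x : X, x ∈ S' ↔ z0 + x ∈ S := by
    intro x
    constructor
    · rintro ⟨s, hs, rfl⟩; rwa [add_neg_cancel_left]
    · intro h; exact ⟨z0 + x, h, neg_add_cancel_left _ _⟩
  have hS'conv : Convex ℝ S' := hSconv.translate (-z0)
  have hz0S : z0 ∈ S := by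
    have := Set.sub_mem_sub ha0A (Set.add_mem_add hb0 h0U)
    rwa [add_zero] at this
  have h0S' : (0:X) ∈ S' := (hS'mem 0).2 (by rwa [add_zero])
  have habs' : Absorbent ℝ S' := by
    apply absorbent_of_pointwise
    intro d
    obtain ⟨δ, hδ, hδU⟩ := hUdir (-d)
    refine ⟨δ, hδ, fun lam hlam => ?_⟩
    rw [hS'mem]
    have hmem : a0 - (b0 + lam • (-d)) ∈ S :=
      Set.sub_mem_sub ha0A (Set.add_mem_add hb0 (hδU lam hlam))
    have heq : a0 - (b0 + lam • (-d)) = z0 + lam • d := by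
      rw [hz0, smul_neg]; abel
    rwa [heq] at hmem
  have h0nS : (0:X) ∉ S := by
    rintro ⟨a, ha, w, hw, hsum⟩
    obtain ⟨b', hb', u, hu, rfl⟩ := hw
    have hsum' : a - (b' + u) = 0 := hsum
    have heq : a = b' + u := sub_eq_zero.1 hsum'
    exact hABU b' hb' u hu (heq ▸ ha)
  have hgauge : 1 ≤ gauge S' (-z0) := by
    by_contra h
    push_neg at h
    have hmem : -z0 ∈ S' := gauge_lt_one_subset_self hS'conv h0S' habs' h
    rw [hS'mem] at hmem
    rw [add_neg_cancel] at hmem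
    exact h0nS hmem
  obtain ⟨f, hfz, hfle⟩ := gaugeHB hS'conv habs' hgauge
  have hfz1 : 1 ≤ f (-z0) := by rw [hfz]; exact hgauge
  have hSle : ∀ s ∈ S, f s ≤ 0 := by
    intro s hs
    have hmem : -z0 + s ∈ S' := ⟨s, hs, rfl⟩
    have h1 : f (-z0 + s) ≤ 1 := le_trans (hfle _) (gauge_le_one_of_mem hmem)
    rw [map_add] at h1
    linarith
  obtain ⟨δ, hδ, hδU⟩ := hUdir z0
  set u0 : X := δ • z0 with hu0
  have hu0U : u0 ∈ U := hδU δ ⟨hδ.le, le_refl _⟩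
  have hfu0 : f u0 ≤ -δ := by
    have h1 : f u0 = δ * f z0 := by rw [hu0, map_smul, smul_eq_mul]
    have h2 : f z0 ≤ -1 := by
      have := hfz1
      rw [map_neg] at this
      linarith
    calc f u0 = δ * f z0 := h1
    _ ≤ δ * (-1) := mul_le_mul_of_nonneg_left h2 hδ.le
    _ = -δ := by ring
  have key : ∀ a ∈ A, ∀ b' ∈ B, f a ≤ f b' - δ := by
    intro a ha b' hb'
    have hmem : a - (b' + u0) ∈ S :=
      Set.sub_mem_sub ha (Set.add_mem_add hb' hu0U)
    have h1 := hSle _ hmem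
    rw [map_sub, map_add] at h1
    linarith
  have hbdd : BddBelow (f '' B) := by
    refine ⟨f a0 + δ, ?_⟩
    rintro y ⟨b', hb', rfl⟩
    have := key a0 ha0A b' hb'
    linarith
  set β : ℝ := sInf (f '' B) with hβ
  have hβle : ∀ b' ∈ B, β ≤ f b' := fun b' h => csInf_le hbdd ⟨b', h, rfl⟩
  have hαβ : ∀ a ∈ A, f a + δ ≤ β := by
    intro a ha
    refine le_csInf ⟨f b0, b0, hb0, rfl⟩ ?_
    rintro y ⟨b', hb', rfl⟩
    have := key a ha b' hb'
    linarith
  exact ⟨f, β - δ, β, by linarith, fun a ha => by linarith [hαβ a ha], hβle⟩
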